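/- Let A, B ∈ ℚ[X] be linearly independent polynomials with deg A < deg B, and let ξ be a complex algebraic number of degree greater than deg A + deg B − 1. If A(ξ)·B'(ξ) − A'(ξ)·B(ξ) = 0, then a contradiction follows; that is, A(ξ)B'(ξ) − A'(ξ)B(ξ) ≠ 0. -/
import Mathlib


open Polynomial

lemma deriv_coeff_top (p : ℚ[X]) (hn : p.natDegree ≠ 0) :
    (derivative p).coeff (p.natDegree - 1) = p.leadingCoeff * p.natDegree := by
  obtain ⟨k, hk⟩ := Nat.exists_eq_succ_of_ne_zero hn
  rw [hk]
  simp only [Nat.succ_sub_one, coeff_derivative, leadingCoeff, hk]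
  push_cast
  ring

lemma deriv_natDegree (p : ℚ[X]) (hn : p.natDegree ≠ 0) :
    (derivative p).natDegree = p.natDegree - 1 := by
  refine le_antisymm (natDegree_derivative_le p) (le_natDegree_of_ne_zero ?_)
  rw [deriv_coeff_top p hn]
  have hp : p ≠ 0 := fun h => hn (by simp [h])
  have h1 : p.leadingCoeff ≠ 0 := leadingCoeff_ne_zero.mpr hp
  have h2 : ((p.natDegree : ℚ)) ≠ 0 := Nat.cast_ne_zero.mpr hn
  exact mul_ne_zero h1 h2

lemma deriv_lc (p : ℚ[X]) (hn : p.natDegree ≠ 0) :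
    (derivative p).leadingCoeff = p.leadingCoeff * p.natDegree := by
  rw [leadingCoeff, deriv_natDegree p hn, deriv_coeff_top p hn]

theorem wronskian_ne_zero_at_high_degree_algebraic (A B : ℚ[X])
    (hAB : LinearIndependent ℚ ![A, B]) (hdegAB : A.natDegree < B.natDegree)
    (ξ : ℂ) (hξalg : IsAlgebraic ℚ ξ)
    (hdeg : A.natDegree + B.natDegree - 1 < (minpoly ℚ ξ).natDegree) :
    aeval ξ A * aeval ξ (derivative B) - aeval ξ (derivative A) * aeval ξ B ≠ 0 := by
  intro h
  have hA : A ≠ 0 := by simpa using hAB.ne_zero 0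
  have hB : B ≠ 0 := by simpa using hAB.ne_zero 1
  have hn0 : B.natDegree ≠ 0 := by omega
  have hlcA : A.leadingCoeff ≠ 0 := leadingCoeff_ne_zero.mpr hA
  have hlcB : B.leadingCoeff ≠ 0 := leadingCoeff_ne_zero.mpr hB
  set W : ℚ[X] := wronskian A B with hW
  have hWdef : W = A * derivative B - derivative A * B := rfl
  have hcoeff1 : (A * derivative B).coeff (A.natDegree + (B.natDegree - 1)) =
      A.leadingCoeff * (B.leadingCoeff * B.natDegree) := by
    have h1 := coeff_mul_degree_add_degree A (derivative B)
    rw [deriv_natDegree B hn0] at h1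
    rw [h1, deriv_lc B hn0]
  have hWne : W ≠ 0 := by
    by_cases hm0 : A.natDegree = 0
    · have hA' : derivative A = 0 := by
        rw [eq_C_of_natDegree_eq_zero hm0]
        simp
      intro hWz
      rw [hWdef, hA', zero_mul, sub_zero] at hWz
      rcases mul_eq_zero.mp hWz with h1 | h2
      · exact hA h1
      · have h3 : (derivative B).coeff (B.natDegree - 1) ≠ 0 := by
          rw [deriv_coeff_top B hn0]
          exact mul_ne_zero hlcB (Nat.cast_ne_zero.mpr hn0)
        exact h3 (by rw [h2]; simp)
    · have hcoeff2 : (derivative A * B).coeff ((A.natDegree - 1) + B.natDegree) =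
          (A.leadingCoeff * A.natDegree) * B.leadingCoeff := by
        have h1 := coeff_mul_degree_add_degree (derivative A) B
        rw [deriv_natDegree A hm0] at h1
        rw [h1, deriv_lc A hm0]
      intro hWz
      have key : W.coeff (A.natDegree + (B.natDegree - 1)) =
          A.leadingCoeff * B.leadingCoeff * ((B.natDegree : ℚ) - (A.natDegree : ℚ)) := by
        rw [hWdef, coeff_sub, hcoeff1,
          show A.natDegree + (B.natDegree - 1) = (A.natDegree - 1) + B.natDegree by omega,
          hcoeff2]
        ring
      have hne : A.leadingCoeff * B.leadingCoeff *
          ((B.natDegree : ℚ) - (A.natDegree : ℚ)) ≠ 0 := by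
        refine mul_ne_zero (mul_ne_zero hlcA hlcB) (sub_ne_zero.mpr ?_)
        exact_mod_cast hdegAB.ne'
      rw [hWz, coeff_zero] at key
      exact hne key.symm
  have haW : aeval ξ W = 0 := by
    rw [hWdef]
    simp only [map_sub, map_mul]
    exact h
  have hdvd : minpoly ℚ ξ ∣ W := minpoly.dvd ℚ ξ haW
  have hle : (minpoly ℚ ξ).natDegree ≤ W.natDegree :=
    natDegree_le_of_dvd hdvd hWne
  have hlt : W.natDegree < A.natDegree + B.natDegree := natDegree_wronskian_lt_add hWne
  omega
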